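/- arXiv:1802.05359 — 3 statements merged into one kernel-verified Lean document; each statement's English description precedes it below -/
import Mathlib

section
/- Let F be a perfect field, A an m × m non-derogatory matrix over F (its minimal polynomial equals its characteristic polynomial c_A(x)), and B an n × n matrix over F with invariant factors t₁(x), …, t_n(x) of xI − B. Then the nullity of Iₙ ⊗ A − Bᵀ ⊗ Iₘ equals ∑_{j=1}^{n} deg(gcd(c_A(x), t_j(x))). -/
open Matrix Kronecker Polynomial Classical
noncomputable section

section Aux
variable {F : Type*} [Field F] {V : Type*} [AddCommGroup V] [Module F V]


-- helper: aeval of restricted endomorphism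
lemma coe_aeval_restrict (f : V →ₗ[F] V) {W : Submodule F V} (h : ∀ x ∈ W, f x ∈ W)
    (p : F[X]) (x : W) :
    ((aeval (f.restrict h) p) x : V) = aeval f p (x : V) := by
  induction p using Polynomial.induction_on' with
  | add p q hp hq => simp [hp, hq]
  | monomial n a =>
      simp only [aeval_monomial, Module.End.mul_apply, Module.algebraMap_end_apply,
        LinearMap.smul_apply, Submodule.coe_smul, Module.End.pow_restrict,
        LinearMap.restrict_apply]
      congr 1
      rw [Module.End.pow_restrict, LinearMap.restrict_apply]

lemma mkQ_aeval (f : V →ₗ[F] V) {W : Submodule F V} (h : W ≤ W.comap f) (p : F[X]) (x : V) :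
    W.mkQ (aeval f p x) = aeval (Submodule.mapQ W W f h) p (W.mkQ x) := by
  induction p using Polynomial.induction_on' with
  | add p q hp hq => simp only [_root_.map_add, LinearMap.add_apply, hp, hq]
  | monomial n a =>
      simp only [aeval_monomial, Module.End.mul_apply, Module.algebraMap_end_apply,
        LinearMap.smul_apply, _root_.map_smul]
      congr 1
      induction n generalizing x with
      | zero => simp
      | succ k ih =>
          rw [pow_succ, Module.End.mul_apply, ih (f x), pow_succ, Module.End.mul_apply]
          simp [Submodule.mkQ_apply, Submodule.mapQ_apply]

open Module LinearMap in
lemma nullity_le_of_nonderog [FiniteDimensional F V] (f : V →ₗ[F] V)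
    (hf : finrank F V ≤ (minpoly F f).natDegree) (g : F[X]) (hg : g ≠ 0) :
    finrank F (LinearMap.ker (aeval f g)) ≤ g.natDegree := by
  set W : Submodule F V := LinearMap.ker (aeval f g) with hWdef
  have hinv : ∀ x ∈ W, f x ∈ W := by
    intro x hx
    have hx' : aeval f g x = 0 := hx
    have : aeval f g (f x) = f (aeval f g x) := by
      have : aeval f g * f = f * aeval f g := by
        have h1 : aeval f (g * X) = aeval f (X * g) := by rw [mul_comm]
        simpa [_root_.map_mul] using h1
      calc aeval f g (f x) = (aeval f g * f) x := rfl
        _ = (f * aeval f g) x := by rw [this]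
        _ = f (aeval f g x) := rfl
    show aeval f g (f x) = 0
    rw [this, hx', map_zero]
  have hinv' : W ≤ W.comap f := hinv
  set f₁ : W →ₗ[F] W := f.restrict hinv with hf₁
  set f₂ : (V ⧸ W) →ₗ[F] (V ⧸ W) := Submodule.mapQ W W f hinv' with hf₂
  -- minpoly f₁ divides g
  have h₁ : minpoly F f₁ ∣ g := by
    apply minpoly.dvd
    ext x
    have := coe_aeval_restrict f hinv g x
    have hx : aeval f g (x : V) = 0 := x.2
    simpa [hx] using congrArg Subtype.val (Subtype.ext (this.trans hx) :
      (aeval f₁ g) x = 0)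
  have h₁0 : minpoly F f₁ ≠ 0 := fun h => hg (by simpa [h] using h₁)
  -- minpoly f₂ divides charpoly f₂
  have h₂ : minpoly F f₂ ∣ LinearMap.charpoly f₂ := LinearMap.minpoly_dvd_charpoly f₂
  have hc₂ : (LinearMap.charpoly f₂) ≠ 0 := (LinearMap.charpoly_monic f₂).ne_zero
  have h₂0 : minpoly F f₂ ≠ 0 := fun h => hc₂ (by simpa [h] using h₂)
  have h₂deg : (minpoly F f₂).natDegree ≤ finrank F (V ⧸ W) := by
    have := Polynomial.natDegree_le_of_dvd h₂ hc₂
    rwa [LinearMap.charpoly_natDegree] at this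
  -- minpoly f divides the product
  have hprod : minpoly F f ∣ minpoly F f₁ * minpoly F f₂ := by
    apply minpoly.dvd
    rw [_root_.map_mul]
    ext v
    have hv : aeval f (minpoly F f₂) v ∈ W := by
      have := mkQ_aeval f hinv' (minpoly F f₂) v
      have h0 : aeval f₂ (minpoly F f₂) = 0 := minpoly.aeval F f₂
      rw [h0] at this
      simp only [LinearMap.zero_apply] at this
      rwa [Submodule.mkQ_apply, Submodule.Quotient.mk_eq_zero] at this
    have : aeval f (minpoly F f₁) (aeval f (minpoly F f₂) v) = 0 := by
      have := coe_aeval_restrict f hinv (minpoly F f₁) ⟨_, hv⟩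
      rw [minpoly.aeval F f₁] at this
      simp only [LinearMap.zero_apply, ZeroMemClass.coe_zero] at this
      exact this.symm
    simp only [Module.End.mul_apply, LinearMap.zero_apply]
    exact this
  have hne : minpoly F f₁ * minpoly F f₂ ≠ 0 := mul_ne_zero h₁0 h₂0
  have hdeg : finrank F V ≤ (minpoly F f₁).natDegree + (minpoly F f₂).natDegree := by
    have := Polynomial.natDegree_le_of_dvd hprod hne
    rw [Polynomial.natDegree_mul h₁0 h₂0] at this
    omega
  have h₁deg : (minpoly F f₁).natDegree ≤ g.natDegree := Polynomial.natDegree_le_of_dvd h₁ hg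
  have hq : finrank F (V ⧸ W) + finrank F W = finrank F V :=
    Submodule.finrank_quotient_add_finrank W
  omega

open Module LinearMap in
lemma nullity_eq_of_nonderog [FiniteDimensional F V] (f : V →ₗ[F] V)
    (hf : finrank F V ≤ (minpoly F f).natDegree) (g : F[X]) (hg : g ≠ 0)
    (hdvd : g ∣ minpoly F f) :
    finrank F (LinearMap.ker (aeval f g)) = g.natDegree := by
  have hm0 : minpoly F f ≠ 0 := minpoly.ne_zero (LinearMap.isIntegral f)
  obtain ⟨h, hgh⟩ := hdvd
  have hh0 : h ≠ 0 := by rintro rfl; simp [hgh] at hm0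
  have hdegsum : g.natDegree + h.natDegree = (minpoly F f).natDegree := by
    rw [hgh, Polynomial.natDegree_mul hg hh0]
  have hdegle : (minpoly F f).natDegree ≤ finrank F V := by
    have := Polynomial.natDegree_le_of_dvd (minpoly_dvd_charpoly f)
      (charpoly_monic f).ne_zero
    rwa [LinearMap.charpoly_natDegree] at this
  have hle := nullity_le_of_nonderog f hf g hg
  have hleh := nullity_le_of_nonderog f hf h hh0
  have hsub : LinearMap.range (aeval f h) ≤ LinearMap.ker (aeval f g) := by
    rintro _ ⟨v, rfl⟩
    show aeval f g (aeval f h v) = 0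
    have : aeval f g * aeval f h = 0 := by
      rw [← _root_.map_mul, ← hgh, minpoly.aeval]
    calc aeval f g (aeval f h v) = (aeval f g * aeval f h) v := rfl
      _ = 0 := by rw [this]; rfl
  have hrk : finrank F (LinearMap.range (aeval f h)) + finrank F (LinearMap.ker (aeval f h))
      = finrank F V := LinearMap.finrank_range_add_finrank_ker _
  have hmono := Submodule.finrank_mono hsub
  omega

open Module LinearMap Matrix in
lemma matrix_nullity_eq {m : ℕ} (A : Matrix (Fin m) (Fin m) F)
    (hA : minpoly F A = A.charpoly) (g : F[X]) (hg : g ≠ 0) (hdvd : g ∣ A.charpoly) :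
    finrank F (LinearMap.ker (aeval A g).mulVecLin) = g.natDegree := by
  have hker : (aeval A g).mulVecLin = aeval (Matrix.toLin' A) g := by
    have h := Polynomial.aeval_algHom_apply
      (Matrix.toLinAlgEquiv' : Matrix (Fin m) (Fin m) F ≃ₐ[F] _).toAlgHom A g
    exact h.symm
  have hmin : minpoly F (Matrix.toLin' A) = A.charpoly := by
    rw [← hA]
    exact Matrix.minpoly_toLin' A
  rw [hker]
  refine nullity_eq_of_nonderog _ ?_ g hg ?_
  · rw [hmin, Matrix.charpoly_natDegree_eq_dim]
    simp [Module.finrank_pi]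
  · rwa [hmin]

open Classical Module LinearMap Matrix in
lemma ker_aeval_dvd {m : ℕ} (A : Matrix (Fin m) (Fin m) F) {p q : F[X]} (h : p ∣ q) :
    LinearMap.ker (aeval A p).mulVecLin ≤ LinearMap.ker (aeval A q).mulVecLin := by
  obtain ⟨r, rfl⟩ := h
  intro v hv
  have hv' : (aeval A p).mulVec v = 0 := hv
  show (aeval A (p * r)).mulVec v = 0
  rw [mul_comm, _root_.map_mul, ← Matrix.mulVec_mulVec, hv', Matrix.mulVec_zero]

open Classical Module LinearMap Matrix in
lemma ker_aeval_gcd {m : ℕ} (A : Matrix (Fin m) (Fin m) F) (p : F[X]) :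
    LinearMap.ker (aeval A p).mulVecLin
      = LinearMap.ker (aeval A (EuclideanDomain.gcd A.charpoly p)).mulVecLin := by
  apply le_antisymm
  · intro v hv
    have hv' : (aeval A p).mulVec v = 0 := hv
    have hbez := EuclideanDomain.gcd_eq_gcd_ab A.charpoly p
    show (aeval A (EuclideanDomain.gcd A.charpoly p)).mulVec v = 0
    rw [hbez]
    simp only [_root_.map_add, _root_.map_mul, Matrix.add_mulVec]
    rw [Matrix.aeval_self_charpoly]
    have : (aeval A p * aeval A (EuclideanDomain.gcdB A.charpoly p)).mulVec v = 0 := by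
      rw [← _root_.map_mul, mul_comm, _root_.map_mul, ← Matrix.mulVec_mulVec, hv', Matrix.mulVec_zero]
    simp [this]
  · exact ker_aeval_dvd A (EuclideanDomain.gcd_dvd_right _ _)

end Aux

section Aux2
variable {F : Type*} [Field F] {m n : ℕ}


/-- The action of a polynomial matrix `P` on `Matrix (Fin m) (Fin n) F`, where the variable
acts as left multiplication by `A` and `P` acts like right multiplication. -/
def pact (A : Matrix (Fin m) (Fin m) F) (P : Matrix (Fin n) (Fin n) F[X])
    (X : Matrix (Fin m) (Fin n) F) : Matrix (Fin m) (Fin n) F :=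
  Matrix.of fun r j => (∑ i, (aeval A (P i j)) *ᵥ (fun s => X s i)) r

lemma sum_mulVec' {ι : Type*} (s : Finset ι) (M : ι → Matrix (Fin m) (Fin m) F)
    (v : Fin m → F) : (∑ k ∈ s, M k) *ᵥ v = ∑ k ∈ s, M k *ᵥ v := by
  induction s using Finset.cons_induction with
  | empty => simp
  | cons a s h ih => rw [Finset.sum_cons, Finset.sum_cons, Matrix.add_mulVec, ih]

lemma mulVec_sum' {ι : Type*} (s : Finset ι) (M : Matrix (Fin m) (Fin m) F)
    (v : ι → Fin m → F) : M *ᵥ (∑ k ∈ s, v k) = ∑ k ∈ s, M *ᵥ v k := by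
  induction s using Finset.cons_induction with
  | empty => simp
  | cons a s h ih => rw [Finset.sum_cons, Finset.sum_cons, Matrix.mulVec_add, ih]

lemma pact_col (A : Matrix (Fin m) (Fin m) F) (P : Matrix (Fin n) (Fin n) F[X])
    (X : Matrix (Fin m) (Fin n) F) (j : Fin n) :
    (fun r => pact A P X r j) = ∑ i, (aeval A (P i j)) *ᵥ (fun s => X s i) := by
  funext r
  simp [pact]

lemma pact_one (A : Matrix (Fin m) (Fin m) F) (X : Matrix (Fin m) (Fin n) F) :
    pact A 1 X = X := by
  ext r j
  simp only [pact, Matrix.of_apply, Finset.sum_apply]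
  rw [Finset.sum_eq_single j]
  · simp [Matrix.one_apply]
  · intro i _ hij
    simp only [Matrix.one_apply, if_neg hij]
    simp
  · simp

lemma pact_mul (A : Matrix (Fin m) (Fin m) F) (P Q : Matrix (Fin n) (Fin n) F[X])
    (X : Matrix (Fin m) (Fin n) F) :
    pact A (P * Q) X = pact A Q (pact A P X) := by
  ext r j
  have hL : (fun r => pact A (P * Q) X r j)
      = ∑ i, ∑ k, (aeval A (P i k * Q k j)) *ᵥ (fun s => X s i) := by
    rw [pact_col]
    congr 1
    funext i
    rw [Matrix.mul_apply, map_sum, sum_mulVec']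
  have hR : (fun r => pact A Q (pact A P X) r j)
      = ∑ i, ∑ k, (aeval A (P i k * Q k j)) *ᵥ (fun s => X s i) := by
    rw [pact_col]
    have : ∀ k, (fun s => pact A P X s k) = ∑ i, (aeval A (P i k)) *ᵥ (fun s => X s i) :=
      fun k => pact_col A P X k
    calc (∑ k, (aeval A (Q k j)) *ᵥ (fun s => pact A P X s k))
        = ∑ k, ∑ i, (aeval A (Q k j)) *ᵥ ((aeval A (P i k)) *ᵥ (fun s => X s i)) := by
          refine Finset.sum_congr rfl fun k _ => ?_
          rw [this k, mulVec_sum']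
      _ = ∑ k, ∑ i, (aeval A (P i k * Q k j)) *ᵥ (fun s => X s i) := by
          refine Finset.sum_congr rfl fun k _ => Finset.sum_congr rfl fun i _ => ?_
          rw [Matrix.mulVec_mulVec, ← _root_.map_mul, mul_comm (Q k j)]
      _ = ∑ i, ∑ k, (aeval A (P i k * Q k j)) *ᵥ (fun s => X s i) := Finset.sum_comm
  have := congrFun hL r
  have h2 := congrFun hR r
  rw [show pact A (P * Q) X r j = (fun r => pact A (P * Q) X r j) r from rfl, hL,
    show pact A Q (pact A P X) r j = (fun r => pact A Q (pact A P X) r j) r from rfl, hR]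

lemma pact_add (A : Matrix (Fin m) (Fin m) F) (P : Matrix (Fin n) (Fin n) F[X])
    (X Y : Matrix (Fin m) (Fin n) F) : pact A P (X + Y) = pact A P X + pact A P Y := by
  ext r j
  simp only [pact, Matrix.of_apply, Finset.sum_apply, Matrix.add_apply]
  rw [← Finset.sum_add_distrib]
  refine Finset.sum_congr rfl fun i _ => ?_
  have h : (fun s => X s i + Y s i) = (fun s => X s i) + (fun s => Y s i) := rfl
  rw [h, Matrix.mulVec_add, Pi.add_apply]

lemma pact_smul (A : Matrix (Fin m) (Fin m) F) (P : Matrix (Fin n) (Fin n) F[X])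
    (c : F) (X : Matrix (Fin m) (Fin n) F) : pact A P (c • X) = c • pact A P X := by
  ext r j
  simp only [pact, Matrix.of_apply, Finset.sum_apply, Matrix.smul_apply, smul_eq_mul,
    Finset.mul_sum]
  refine Finset.sum_congr rfl fun i _ => ?_
  have h : (fun s => c * X s i) = c • (fun s => X s i) := rfl
  rw [h, Matrix.mulVec_smul, Pi.smul_apply, smul_eq_mul]

/-- `pact` as a linear map. -/
def pactL (A : Matrix (Fin m) (Fin m) F) (P : Matrix (Fin n) (Fin n) F[X]) :
    Matrix (Fin m) (Fin n) F →ₗ[F] Matrix (Fin m) (Fin n) F where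
  toFun := pact A P
  map_add' := pact_add A P
  map_smul' := pact_smul A P

/-- `pact` of a unit polynomial matrix, as a linear equivalence. -/
def pactEquiv (A : Matrix (Fin m) (Fin m) F) (P Q : Matrix (Fin n) (Fin n) F[X])
    (h1 : P * Q = 1) (h2 : Q * P = 1) :
    Matrix (Fin m) (Fin n) F ≃ₗ[F] Matrix (Fin m) (Fin n) F :=
  LinearEquiv.ofLinear (pactL A P) (pactL A Q)
    (LinearMap.ext fun X => show pact A P (pact A Q X) = X by
      rw [← pact_mul, h2, pact_one])
    (LinearMap.ext fun X => show pact A Q (pact A P X) = X by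
      rw [← pact_mul, h1, pact_one])

lemma pact_charmatrix (A : Matrix (Fin m) (Fin m) F) (B : Matrix (Fin n) (Fin n) F)
    (X : Matrix (Fin m) (Fin n) F) : pact A B.charmatrix X = A * X - X * B := by
  ext r j
  simp only [pact, Matrix.of_apply, Finset.sum_apply, Matrix.sub_apply]
  have key : ∀ i, ((aeval A (B.charmatrix i j)) *ᵥ fun s => X s i) r
      = (if i = j then (A *ᵥ fun s => X s j) r else 0) - B i j * X r i := by
    intro i
    by_cases h : i = j
    · subst h
      rw [charmatrix_apply_eq, if_pos rfl, _root_.map_sub, aeval_X, aeval_C, Matrix.sub_mulVec]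
      simp only [Pi.sub_apply]
      congr 1
      have : (algebraMap F (Matrix (Fin m) (Fin m) F)) (B i i) = B i i • 1 := by
        rw [Algebra.algebraMap_eq_smul_one]
      rw [this, Matrix.smul_mulVec, Matrix.one_mulVec, Pi.smul_apply, smul_eq_mul]
    · rw [charmatrix_apply_ne _ _ _ h, if_neg h, map_neg, aeval_C, Matrix.neg_mulVec,
        Pi.neg_apply, zero_sub]
      congr 1
      have : (algebraMap F (Matrix (Fin m) (Fin m) F)) (B i j) = B i j • 1 := by
        rw [Algebra.algebraMap_eq_smul_one]
      rw [this, Matrix.smul_mulVec, Matrix.one_mulVec, Pi.smul_apply, smul_eq_mul]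
  rw [Finset.sum_congr rfl fun i _ => key i, Finset.sum_sub_distrib]
  congr 1
  · rw [Finset.sum_ite_eq' Finset.univ j fun _ => (A *ᵥ fun s => X s j) r]
    simp [Matrix.mul_apply, Matrix.mulVec, dotProduct]
  · rw [Matrix.mul_apply]
    refine Finset.sum_congr rfl fun i _ => mul_comm _ _

lemma pact_diagonal (A : Matrix (Fin m) (Fin m) F) (t : Fin n → F[X])
    (X : Matrix (Fin m) (Fin n) F) (r : Fin m) (j : Fin n) :
    pact A (Matrix.diagonal t) X r j = ((aeval A (t j)) *ᵥ fun s => X s j) r := by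
  simp only [pact, Matrix.of_apply, Finset.sum_apply]
  rw [Finset.sum_eq_single j]
  · rw [Matrix.diagonal_apply_eq]
  · intro i _ hij
    rw [Matrix.diagonal_apply_ne _ hij]
    simp
  · simp

open Module in
lemma finrank_congr' {M N : Type*} [AddCommGroup M] [Module F M] [AddCommGroup N] [Module F N]
    (e : M ≃ₗ[F] N) (p : Submodule F M) (q : Submodule F N) (h : ∀ x, x ∈ p ↔ e x ∈ q) :
    finrank F p = finrank F q := by
  have hmap : p.map (e : M →ₗ[F] N) = q := by
    ext y
    constructor
    · rintro ⟨x, hx, rfl⟩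
      exact (h x).1 hx
    · intro hy
      exact ⟨e.symm y, (h _).2 (by simpa using hy), by simp⟩
  rw [← hmap, LinearEquiv.finrank_map_eq]

/-- Transpose-flip between vectors indexed by pairs and matrices. -/
def flipEquiv : ((Fin n × Fin m) → F) ≃ₗ[F] Matrix (Fin m) (Fin n) F where
  toFun v := Matrix.of fun s i => v (i, s)
  invFun X := fun p => X p.2 p.1
  map_add' _ _ := rfl
  map_smul' _ _ := rfl
  left_inv _ := rfl
  right_inv _ := rfl

/-- The Sylvester map. -/
def sylvL (A : Matrix (Fin m) (Fin m) F) (B : Matrix (Fin n) (Fin n) F) :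
    Matrix (Fin m) (Fin n) F →ₗ[F] Matrix (Fin m) (Fin n) F where
  toFun X := A * X - X * B
  map_add' X Y := by
    simp only [Matrix.mul_add, Matrix.add_mul]
    abel
  map_smul' c X := by
    simp only [Matrix.mul_smul, Matrix.smul_mul, RingHom.id_apply, smul_sub]

lemma sylv_flip (A : Matrix (Fin m) (Fin m) F) (B : Matrix (Fin n) (Fin n) F)
    (v : (Fin n × Fin m) → F) :
    sylvL A B (flipEquiv v)
      = flipEquiv (((1 : Matrix (Fin n) (Fin n) F) ⊗ₖ A
          - Bᵀ ⊗ₖ (1 : Matrix (Fin m) (Fin m) F)).mulVecLin v) := by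
  ext r j
  change (A * Matrix.of (fun s i => v (i, s)) - Matrix.of (fun s i => v (i, s)) * B) r j
    = (((1 : Matrix (Fin n) (Fin n) F) ⊗ₖ A
          - Bᵀ ⊗ₖ (1 : Matrix (Fin m) (Fin m) F)) *ᵥ v) (j, r)
  simp only [sylvL, flipEquiv, LinearMap.coe_mk, AddHom.coe_mk, LinearEquiv.coe_mk,
    Matrix.of_apply, Matrix.sub_apply, Matrix.mul_apply, Matrix.mulVecLin_apply,
    Matrix.mulVec, dotProduct, Fintype.sum_prod_type, Matrix.sub_apply,
    Matrix.kroneckerMap_apply, sub_mul, Finset.sum_sub_distrib, Matrix.one_apply,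
    Matrix.transpose_apply, ite_mul, one_mul, zero_mul]
  congr 1
  · symm
    rw [Finset.sum_comm]
    refine Finset.sum_congr rfl fun l _ => ?_
    rw [Finset.sum_ite_eq Finset.univ j (fun x => A r l * v (x, l))]
    simp
  · symm
    rw [Finset.sum_comm]
    rw [Finset.sum_comm]
    refine Finset.sum_congr rfl fun i _ => ?_
    simp only [mul_ite, mul_one, mul_zero, ite_mul, zero_mul]
    rw [Finset.sum_ite_eq Finset.univ r (fun y => B i j * v (i, y))]
    simp [mul_comm]

/-- The kernel of the diagonal action splits as a product of kernels. -/
def diagKerEquiv (A : Matrix (Fin m) (Fin m) F) (t : Fin n → F[X]) :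
    (LinearMap.ker (pactL A (Matrix.diagonal t)))
      ≃ₗ[F] (Π j, LinearMap.ker (aeval A (t j)).mulVecLin) where
  toFun X j := ⟨fun s => X.1 s j, by
    have hX : pact A (Matrix.diagonal t) X.1 = 0 := X.2
    rw [LinearMap.mem_ker]
    ext r
    rw [Matrix.mulVecLin_apply]
    have := congrFun (congrFun hX r) j
    rw [pact_diagonal] at this
    simpa using this⟩
  map_add' X Y := by
    funext j
    exact Subtype.ext rfl
  map_smul' c X := by
    funext j
    exact Subtype.ext rfl
  invFun u := ⟨Matrix.of fun s j => (u j).1 s, by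
    rw [LinearMap.mem_ker]
    ext r j
    show pact A (Matrix.diagonal t) _ r j = 0
    rw [pact_diagonal]
    have := (u j).2
    rw [LinearMap.mem_ker] at this
    have h2 := congrFun this r
    rw [Matrix.mulVecLin_apply] at h2
    simpa using h2⟩
  left_inv X := by
    apply Subtype.ext
    rfl
  right_inv u := by
    funext j
    exact Subtype.ext rfl


end Aux2

/-- over a perfect field, if `A` is non-derogatory (its minimal polynomial
equals its characteristic polynomial) and `t` gives the invariant factors of `xI − B`,
then the nullity of `Iₙ ⊗ A − Bᵀ ⊗ Iₘ` equals `∑ j deg (gcd (c_A, t j))`. -/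
theorem nullity_kronecker_sylvester_nonderogatory
    {F : Type*} [Field F] [PerfectField F] {m n : ℕ}
    (A : Matrix (Fin m) (Fin m) F) (B : Matrix (Fin n) (Fin n) F)
    (hA : minpoly F A = A.charpoly)
    (t : Fin n → F[X]) (ht : ∀ j, (t j).Monic)
    (htd : ∀ i j : Fin n, i ≤ j → t i ∣ t j)
    (hW : ∃ U V : Matrix (Fin n) (Fin n) F[X], IsUnit U ∧ IsUnit V ∧
      U * B.charmatrix * V = Matrix.diagonal t) :
    Module.finrank F
        (LinearMap.ker ((1 : Matrix (Fin n) (Fin n) F) ⊗ₖ A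
          - Bᵀ ⊗ₖ (1 : Matrix (Fin m) (Fin m) F)).mulVecLin)
      = ∑ j, (EuclideanDomain.gcd A.charpoly (t j)).natDegree := by
  open Module LinearMap in
  classical
  obtain ⟨U, V, hU, hV, hUV⟩ := hW
  have stepA : finrank F (LinearMap.ker ((1 : Matrix (Fin n) (Fin n) F) ⊗ₖ A
        - Bᵀ ⊗ₖ (1 : Matrix (Fin m) (Fin m) F)).mulVecLin)
      = finrank F (LinearMap.ker (sylvL A B)) := by
    apply finrank_congr' flipEquiv
    intro v
    rw [LinearMap.mem_ker, LinearMap.mem_ker, sylv_flip, LinearEquiv.map_eq_zero_iff]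
  have hVinj : ∀ Y : Matrix (Fin m) (Fin n) F, pact A V Y = 0 ↔ Y = 0 := by
    intro Y
    constructor
    · intro h0
      have h1 : pact A ((↑hV.unit⁻¹ : Matrix (Fin n) (Fin n) F[X])) (pact A V Y) = pact A ((↑hV.unit⁻¹ : Matrix (Fin n) (Fin n) F[X])) 0 := by rw [h0]
      have h2 : pact A ((↑hV.unit⁻¹ : Matrix (Fin n) (Fin n) F[X])) (0 : Matrix (Fin m) (Fin n) F) = 0 :=
        (pactL A ((↑hV.unit⁻¹ : Matrix (Fin n) (Fin n) F[X]))).map_zero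
      rwa [← pact_mul, hV.mul_val_inv, pact_one, h2] at h1
    · rintro rfl
      exact (pactL A V).map_zero
  have stepB : finrank F (LinearMap.ker (pactL A (Matrix.diagonal t)))
      = finrank F (LinearMap.ker (sylvL A B)) := by
    apply finrank_congr' (pactEquiv A U ((↑hU.unit⁻¹ : Matrix (Fin n) (Fin n) F[X])) hU.mul_val_inv hU.val_inv_mul)
    intro X
    rw [LinearMap.mem_ker, LinearMap.mem_ker]
    have key : pactL A (Matrix.diagonal t) X = pact A V (sylvL A B (pact A U X)) := by
      show pact A (Matrix.diagonal t) X = _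
      calc pact A (Matrix.diagonal t) X
          = pact A (U * B.charmatrix * V) X := by rw [hUV]
        _ = pact A V (pact A (U * B.charmatrix) X) := pact_mul A _ V X
        _ = pact A V (pact A B.charmatrix (pact A U X)) := by rw [pact_mul]
        _ = pact A V (sylvL A B (pact A U X)) := by rw [pact_charmatrix]; rfl
    show pactL A (Matrix.diagonal t) X = 0 ↔ sylvL A B (pact A U X) = 0
    rw [key, hVinj]
  have stepC : finrank F (LinearMap.ker (pactL A (Matrix.diagonal t)))
      = ∑ j, finrank F (LinearMap.ker (aeval A (t j)).mulVecLin) := by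
    rw [LinearEquiv.finrank_eq (diagKerEquiv A t), Module.finrank_pi_fintype]
  have c0 : A.charpoly ≠ 0 := A.charpoly_monic.ne_zero
  have stepD : ∀ j, finrank F (LinearMap.ker (aeval A (t j)).mulVecLin)
      = (EuclideanDomain.gcd A.charpoly (t j)).natDegree := by
    intro j
    rw [ker_aeval_gcd]
    exact matrix_nullity_eq A hA _
      (fun h0 => c0 ((EuclideanDomain.gcd_eq_zero_iff).1 h0).1)
      (EuclideanDomain.gcd_dvd_left _ _)
  rw [stepA, ← stepB, stepC]
  exact Finset.sum_congr rfl fun j _ => stepD j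
end
end

section
/- For odd n, m ≥ 3, the nullity over ℤ₂ of the adjacency matrix of S_n □ S_m, the Cartesian product of the star graphs on n and m vertices, equals (m − 2)(n − 2) + 2. -/
open Matrix Kronecker
noncomputable section

/-- The adjacency matrix over `ℤ₂` of the star graph `S_n` on `n` vertices:
vertex `0` is the center, adjacent to every other vertex. -/
def starAdj (n : ℕ) : Matrix (Fin n) (Fin n) (ZMod 2) :=
  fun i j => if ((i : ℕ) = 0 ∧ (j : ℕ) ≠ 0) ∨ ((j : ℕ) = 0 ∧ (i : ℕ) ≠ 0) then 1 else 0

namespace NSCaux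

def dd (P : Prop) [Decidable P] : ZMod 2 := if P then 1 else 0

lemma dd_of {P : Prop} [Decidable P] (h : P) : dd P = 1 := if_pos h
lemma dd_of_not {P : Prop} [Decidable P] (h : ¬ P) : dd P = 0 := if_neg h
lemma dd_congr {P Q : Prop} [Decidable P] [Decidable Q] (h : P ↔ Q) : dd P = dd Q := by
  by_cases hp : P
  · rw [dd_of hp, dd_of (h.mp hp)]
  · rw [dd_of_not hp, dd_of_not (fun hq => hp (h.mpr hq))]

lemma cast_odd {k : ℕ} (h : Odd k) : ((k : ℕ) : ZMod 2) = 1 := by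
  obtain ⟨j, rfl⟩ := h
  push_cast
  have h2 : (2 : ZMod 2) = 0 := rfl
  rw [h2]; ring

lemma sum_pt {k a : ℕ} (ha : a < k) (v : Fin k → ZMod 2) :
    ∑ i : Fin k, dd ((i : ℕ) = a) * v i = v ⟨a, ha⟩ := by
  rw [Finset.sum_eq_single ⟨a, ha⟩]
  · simp [dd]
  · intro b _ hb
    have : ¬ ((b:ℕ) = a) := fun h => hb (Fin.ext h)
    simp [dd_of_not this]
  · intro h; exact absurd (Finset.mem_univ _) h

lemma sum_split {k : ℕ} (hk : 3 ≤ k) (v : Fin k → ZMod 2) :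
    ∑ i : Fin k, v i
      = v ⟨0, by omega⟩ + (∑ p : Fin (k-2), v ⟨(p:ℕ)+1, by omega⟩) + v ⟨k-1, by omega⟩ := by
  classical
  set F : ℕ → ZMod 2 := fun a => if h : a < k then v ⟨a, h⟩ else 0 with hF
  have h1 : ∑ i : Fin k, v i = ∑ a ∈ Finset.range k, F a := by
    rw [← Fin.sum_univ_eq_sum_range]
    exact Finset.sum_congr rfl fun i _ => by simp [hF, i.isLt]
  have h2 : Finset.range k = Finset.range ((k-2+1)+1) := by congr 1; omega
  rw [h1, h2, Finset.sum_range_succ, Finset.sum_range_succ']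
  have e1 : F (k-2+1) = v ⟨k-1, by omega⟩ := by
    have hlt : k-2+1 < k := by omega
    simp only [hF, dif_pos hlt]
    exact congrArg v (Fin.ext (show k-2+1 = k-1 by omega))
  have e2 : F 0 = v ⟨0, by omega⟩ := by
    have hlt : (0:ℕ) < k := by omega
    simp only [hF, dif_pos hlt]
  have e3 : ∑ a ∈ Finset.range (k-2), F (a+1) = ∑ p : Fin (k-2), v ⟨(p:ℕ)+1, by omega⟩ := by
    rw [← Fin.sum_univ_eq_sum_range (fun a => F (a+1))]
    refine Finset.sum_congr rfl fun p _ => ?_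
    have hlt : (p:ℕ)+1 < k := by omega
    simp only [hF, dif_pos hlt]
  rw [e1, e2, e3]; abel

lemma sum_ne {k : ℕ} (hk : 3 ≤ k) (v : Fin k → ZMod 2) :
    ∑ i : Fin k, dd ((i : ℕ) ≠ 0) * v i
      = (∑ p : Fin (k-2), v ⟨(p:ℕ)+1, by omega⟩) + v ⟨k-1, by omega⟩ := by
  have key : ∀ i : Fin k, dd ((i : ℕ) ≠ 0) * v i = v i + dd ((i : ℕ) = 0) * v i := by
    intro i
    by_cases h : (i : ℕ) = 0
    · rw [dd_of h, dd_of_not (by simpa using h)]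
      have : ∀ a : ZMod 2, 0 * a = a + 1 * a := by decide
      exact this _
    · rw [dd_of h, dd_of_not (by simpa using h)]
      have : ∀ a : ZMod 2, 1 * a = a + 0 * a := by decide
      exact this _
  rw [Finset.sum_congr rfl (fun i _ => key i), Finset.sum_add_distrib,
    sum_pt (show 0 < k by omega), sum_split hk]
  have : ∀ a b c : ZMod 2, a + b + c + a = b + c := by decide
  exact this _ _ _

lemma sum_const_odd {k : ℕ} (hk : Odd k) (c : ZMod 2) : ∑ _p : Fin k, c = c := by
  rw [Finset.sum_const, Finset.card_univ, Fintype.card_fin, nsmul_eq_mul, cast_odd hk, one_mul]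


variable (n m : ℕ)

/-- "c" basis vector -/
def vC : Fin n × Fin m → ZMod 2 := fun z =>
  dd ((z.1:ℕ) = 0) * dd ((z.2:ℕ) ≠ 0) + dd ((z.1:ℕ) ≠ 0) * dd ((z.2:ℕ) = 0)

/-- "t" basis vector -/
def vT : Fin n × Fin m → ZMod 2 := fun z =>
  dd ((z.1:ℕ) = 0) * dd ((z.2:ℕ) = 0)
  + dd ((z.1:ℕ) ≠ 0) * dd ((z.2:ℕ) ≠ 0) * (dd ((z.1:ℕ) = 1) + dd ((z.2:ℕ) = 1))

/-- rectangle basis vectors -/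
def vR (p : Fin (n-2)) (q : Fin (m-2)) : Fin n × Fin m → ZMod 2 := fun z =>
  (dd ((z.1:ℕ) = (p:ℕ)+1) + dd ((z.1:ℕ) = n-1)) * (dd ((z.2:ℕ) = (q:ℕ)+1) + dd ((z.2:ℕ) = m-1))

lemma starAdj_eq {k : ℕ} (a b : Fin k) : starAdj k a b
    = dd ((a:ℕ) = 0) * dd ((b:ℕ) ≠ 0) + dd ((a:ℕ) ≠ 0) * dd ((b:ℕ) = 0) := by
  rcases eq_or_ne ((a:ℕ)) 0 with ha | ha <;> rcases eq_or_ne ((b:ℕ)) 0 with hb | hb <;>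
    simp [starAdj, dd, ha, hb]

lemma apply_eq (x : Fin n × Fin m → ZMod 2) (i : Fin n) (j : Fin m) :
    ((starAdj n ⊗ₖ (1 : Matrix (Fin m) (Fin m) (ZMod 2))
          + (1 : Matrix (Fin n) (Fin n) (ZMod 2)) ⊗ₖ starAdj m).mulVecLin x) (i, j)
    = dd ((i:ℕ) = 0) * (∑ i' : Fin n, dd ((i':ℕ) ≠ 0) * x (i', j))
      + dd ((i:ℕ) ≠ 0) * (∑ i' : Fin n, dd ((i':ℕ) = 0) * x (i', j))
      + dd ((j:ℕ) = 0) * (∑ j' : Fin m, dd ((j':ℕ) ≠ 0) * x (i, j'))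
      + dd ((j:ℕ) ≠ 0) * (∑ j' : Fin m, dd ((j':ℕ) = 0) * x (i, j')) := by
  have h1 : ((starAdj n ⊗ₖ (1 : Matrix (Fin m) (Fin m) (ZMod 2))
          + (1 : Matrix (Fin n) (Fin n) (ZMod 2)) ⊗ₖ starAdj m).mulVecLin x) (i, j)
      = (∑ i', starAdj n i i' * x (i', j)) + (∑ j', starAdj m j j' * x (i, j')) := by
    simp [mulVecLin, mulVec, dotProduct, Fintype.sum_prod_type, Matrix.one_apply,
      add_mul, ite_mul, Finset.sum_add_distrib]
  rw [h1]
  have h2 : ∑ i', starAdj n i i' * x (i', j)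
      = dd ((i:ℕ) = 0) * (∑ i' : Fin n, dd ((i':ℕ) ≠ 0) * x (i', j))
        + dd ((i:ℕ) ≠ 0) * (∑ i' : Fin n, dd ((i':ℕ) = 0) * x (i', j)) := by
    rw [Finset.mul_sum, Finset.mul_sum, ← Finset.sum_add_distrib]
    exact Finset.sum_congr rfl fun i' _ => by rw [starAdj_eq]; ring
  have h3 : ∑ j', starAdj m j j' * x (i, j')
      = dd ((j:ℕ) = 0) * (∑ j' : Fin m, dd ((j':ℕ) ≠ 0) * x (i, j'))
        + dd ((j:ℕ) ≠ 0) * (∑ j' : Fin m, dd ((j':ℕ) = 0) * x (i, j')) := by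
    rw [Finset.mul_sum, Finset.mul_sum, ← Finset.sum_add_distrib]
    exact Finset.sum_congr rfl fun j' _ => by rw [starAdj_eq]; ring
  rw [h2, h3]; ring

lemma mem_ker_iff (x : Fin n × Fin m → ZMod 2) :
    (starAdj n ⊗ₖ (1 : Matrix (Fin m) (Fin m) (ZMod 2))
      + (1 : Matrix (Fin n) (Fin n) (ZMod 2)) ⊗ₖ starAdj m).mulVecLin x = 0
    ↔ ∀ (i : Fin n) (j : Fin m),
      dd ((i:ℕ) = 0) * (∑ i' : Fin n, dd ((i':ℕ) ≠ 0) * x (i', j))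
      + dd ((i:ℕ) ≠ 0) * (∑ i' : Fin n, dd ((i':ℕ) = 0) * x (i', j))
      + dd ((j:ℕ) = 0) * (∑ j' : Fin m, dd ((j':ℕ) ≠ 0) * x (i, j'))
      + dd ((j:ℕ) ≠ 0) * (∑ j' : Fin m, dd ((j':ℕ) = 0) * x (i, j')) = 0 := by
  constructor
  · intro h i j
    rw [← apply_eq]
    exact congrFun h (i, j)
  · intro h
    funext z
    obtain ⟨i, j⟩ := z
    rw [Pi.zero_apply, apply_eq]
    exact h i j


variable {n m}

lemma vC_ker (hn : 3 ≤ n) (hm : 3 ≤ m) (hnodd : Odd n) (hmodd : Odd m) :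
    (starAdj n ⊗ₖ (1 : Matrix (Fin m) (Fin m) (ZMod 2))
      + (1 : Matrix (Fin n) (Fin n) (ZMod 2)) ⊗ₖ starAdj m).mulVecLin (vC n m) = 0 := by
  have hn2 : Odd (n-2) := Nat.Odd.sub_even (by omega) hnodd even_two
  have hm2 : Odd (m-2) := Nat.Odd.sub_even (by omega) hmodd even_two
  rw [mem_ker_iff]
  intro i j
  have hS1 : ∑ i' : Fin n, dd ((i':ℕ) ≠ 0) * vC n m (i', j) = 0 := by
    rw [sum_ne hn]
    have h1 : ∀ p : Fin (n-2), vC n m (⟨(p:ℕ)+1, by omega⟩, j) = dd ((j:ℕ) = 0) := by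
      intro p; simp [vC, dd]
    rw [Finset.sum_congr rfl (fun p _ => h1 p), sum_const_odd hn2]
    have h2 : vC n m (⟨n-1, by omega⟩, j) = dd ((j:ℕ) = 0) := by
      simp [vC, dd, show ¬ (n-1 = 0) by omega]
    rw [h2]
    have : ∀ a : ZMod 2, a + a = 0 := by decide
    exact this _
  have hS2 : ∑ i' : Fin n, dd ((i':ℕ) = 0) * vC n m (i', j) = dd ((j:ℕ) ≠ 0) := by
    rw [sum_pt (show (0:ℕ) < n by omega)]
    simp [vC, dd]
  have hS3 : ∑ j' : Fin m, dd ((j':ℕ) ≠ 0) * vC n m (i, j') = 0 := by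
    rw [sum_ne hm]
    have h1 : ∀ q : Fin (m-2), vC n m (i, ⟨(q:ℕ)+1, by omega⟩) = dd ((i:ℕ) = 0) := by
      intro q; simp [vC, dd]
    rw [Finset.sum_congr rfl (fun q _ => h1 q), sum_const_odd hm2]
    have h2 : vC n m (i, ⟨m-1, by omega⟩) = dd ((i:ℕ) = 0) := by
      simp [vC, dd, show ¬ (m-1 = 0) by omega]
    rw [h2]
    have : ∀ a : ZMod 2, a + a = 0 := by decide
    exact this _
  have hS4 : ∑ j' : Fin m, dd ((j':ℕ) = 0) * vC n m (i, j') = dd ((i:ℕ) ≠ 0) := by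
    rw [sum_pt (show (0:ℕ) < m by omega)]
    simp [vC, dd]
  rw [hS1, hS2, hS3, hS4]
  have : ∀ a b c d : ZMod 2, a * 0 + b * c + d * 0 + c * b = 0 := by decide
  exact this _ _ _ _

lemma vT_ker (hn : 3 ≤ n) (hm : 3 ≤ m) (hnodd : Odd n) (hmodd : Odd m) :
    (starAdj n ⊗ₖ (1 : Matrix (Fin m) (Fin m) (ZMod 2))
      + (1 : Matrix (Fin n) (Fin n) (ZMod 2)) ⊗ₖ starAdj m).mulVecLin (vT n m) = 0 := by
  have hn2 : Odd (n-2) := Nat.Odd.sub_even (by omega) hnodd even_two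
  have hm2 : Odd (m-2) := Nat.Odd.sub_even (by omega) hmodd even_two
  rw [mem_ker_iff]
  intro i j
  have hS1 : ∑ i' : Fin n, dd ((i':ℕ) ≠ 0) * vT n m (i', j)
      = dd ((j:ℕ) ≠ 0) + dd ((j:ℕ) ≠ 0) * dd ((j:ℕ) = 1) + dd ((j:ℕ) ≠ 0) * dd ((j:ℕ) = 1) := by
    rw [sum_ne hn]
    have h1 : ∀ p : Fin (n-2), vT n m (⟨(p:ℕ)+1, by omega⟩, j)
        = dd ((p:ℕ) = 0) * dd ((j:ℕ) ≠ 0) + dd ((j:ℕ) ≠ 0) * dd ((j:ℕ) = 1) := by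
      intro p
      simp only [vT, dd]
      split_ifs <;> first | rfl | contradiction | omega | decide
    rw [Finset.sum_congr rfl (fun p _ => h1 p), Finset.sum_add_distrib,
      sum_pt (show (0:ℕ) < n-2 by omega), sum_const_odd hn2]
    have h2 : vT n m (⟨n-1, by omega⟩, j) = dd ((j:ℕ) ≠ 0) * dd ((j:ℕ) = 1) := by
      simp only [vT, dd]
      split_ifs <;> first | rfl | contradiction | omega | decide
    rw [h2]
  have hS2 : ∑ i' : Fin n, dd ((i':ℕ) = 0) * vT n m (i', j) = dd ((j:ℕ) = 0) := by
    rw [sum_pt (show (0:ℕ) < n by omega)]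
    simp [vT, dd]
  have hS3 : ∑ j' : Fin m, dd ((j':ℕ) ≠ 0) * vT n m (i, j')
      = dd ((i:ℕ) ≠ 0) + dd ((i:ℕ) ≠ 0) * dd ((i:ℕ) = 1) + dd ((i:ℕ) ≠ 0) * dd ((i:ℕ) = 1) := by
    rw [sum_ne hm]
    have h1 : ∀ q : Fin (m-2), vT n m (i, ⟨(q:ℕ)+1, by omega⟩)
        = dd ((q:ℕ) = 0) * dd ((i:ℕ) ≠ 0) + dd ((i:ℕ) ≠ 0) * dd ((i:ℕ) = 1) := by
      intro q
      simp only [vT, dd]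
      split_ifs <;> first | rfl | contradiction | omega | decide
    rw [Finset.sum_congr rfl (fun q _ => h1 q), Finset.sum_add_distrib,
      sum_pt (show (0:ℕ) < m-2 by omega), sum_const_odd hm2]
    have h2 : vT n m (i, ⟨m-1, by omega⟩) = dd ((i:ℕ) ≠ 0) * dd ((i:ℕ) = 1) := by
      simp only [vT, dd]
      split_ifs <;> first | rfl | contradiction | omega | decide
    rw [h2]
  have hS4 : ∑ j' : Fin m, dd ((j':ℕ) = 0) * vT n m (i, j') = dd ((i:ℕ) = 0) := by
    rw [sum_pt (show (0:ℕ) < m by omega)]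
    simp [vT, dd]
  rw [hS1, hS2, hS3, hS4]
  have : ∀ a a' b b' c d : ZMod 2,
      a * (b' + b' * d + b' * d) + a' * b + b * (a' + a' * c + a' * c) + b' * a = 0 := by decide
  exact this _ _ _ _ _ _

lemma vR_ker (hn : 3 ≤ n) (hm : 3 ≤ m) (p : Fin (n-2)) (q : Fin (m-2)) :
    (starAdj n ⊗ₖ (1 : Matrix (Fin m) (Fin m) (ZMod 2))
      + (1 : Matrix (Fin n) (Fin n) (ZMod 2)) ⊗ₖ starAdj m).mulVecLin (vR n m p q) = 0 := by
  rw [mem_ker_iff]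
  intro i j
  have hp := p.isLt
  have hq := q.isLt
  have hS1 : ∑ i' : Fin n, dd ((i':ℕ) ≠ 0) * vR n m p q (i', j) = 0 := by
    rw [sum_ne hn]
    have h1 : ∀ p' : Fin (n-2), vR n m p q (⟨(p':ℕ)+1, by omega⟩, j)
        = dd ((p':ℕ) = (p:ℕ)) * (dd ((j:ℕ) = (q:ℕ)+1) + dd ((j:ℕ) = m-1)) := by
      intro p'
      simp only [vR, dd]
      have hne : ¬ ((p':ℕ)+1 = n-1) := by have := p'.isLt; omega
      split_ifs <;> first | rfl | contradiction | omega | decide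
    rw [Finset.sum_congr rfl (fun p' _ => h1 p'), sum_pt hp]
    have h2 : vR n m p q (⟨n-1, by omega⟩, j)
        = dd ((j:ℕ) = (q:ℕ)+1) + dd ((j:ℕ) = m-1) := by
      simp only [vR, dd]
      split_ifs <;> first | rfl | contradiction | omega | decide
    rw [h2]
    have : ∀ a : ZMod 2, a + a = 0 := by decide
    exact this _
  have hS2 : ∑ i' : Fin n, dd ((i':ℕ) = 0) * vR n m p q (i', j) = 0 := by
    rw [sum_pt (show (0:ℕ) < n by omega)]
    simp only [vR, dd]
    split_ifs <;> first | rfl | contradiction | omega | decide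
  have hS3 : ∑ j' : Fin m, dd ((j':ℕ) ≠ 0) * vR n m p q (i, j') = 0 := by
    rw [sum_ne hm]
    have h1 : ∀ q' : Fin (m-2), vR n m p q (i, ⟨(q':ℕ)+1, by omega⟩)
        = dd ((q':ℕ) = (q:ℕ)) * (dd ((i:ℕ) = (p:ℕ)+1) + dd ((i:ℕ) = n-1)) := by
      intro q'
      simp only [vR, dd]
      have hne : ¬ ((q':ℕ)+1 = m-1) := by have := q'.isLt; omega
      split_ifs <;> first | rfl | contradiction | omega | decide
    rw [Finset.sum_congr rfl (fun q' _ => h1 q'), sum_pt hq]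
    have h2 : vR n m p q (i, ⟨m-1, by omega⟩)
        = dd ((i:ℕ) = (p:ℕ)+1) + dd ((i:ℕ) = n-1) := by
      simp only [vR, dd]
      split_ifs <;> first | rfl | contradiction | omega | decide
    rw [h2]
    have : ∀ a : ZMod 2, a + a = 0 := by decide
    exact this _
  have hS4 : ∑ j' : Fin m, dd ((j':ℕ) = 0) * vR n m p q (i, j') = 0 := by
    rw [sum_pt (show (0:ℕ) < m by omega)]
    simp only [vR, dd]
    split_ifs <;> first | rfl | contradiction | omega | decide
  rw [hS1, hS2, hS3, hS4]
  ring


lemma sum_pair {k l : ℕ} {a b : ℕ} (ha : a < k) (hb : b < l) (f : Fin k × Fin l → ZMod 2) :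
    ∑ pq : Fin k × Fin l, f pq * (dd ((pq.1:ℕ) = a) * dd ((pq.2:ℕ) = b)) = f (⟨a,ha⟩, ⟨b,hb⟩) := by
  rw [Fintype.sum_prod_type]
  have h1 : ∀ p : Fin k, (∑ q : Fin l, f (p,q) * (dd ((p:ℕ) = a) * dd ((q:ℕ) = b)))
      = dd ((p:ℕ) = a) * f (p, ⟨b,hb⟩) := by
    intro p
    have hc : ∀ q : Fin l, f (p,q) * (dd ((p:ℕ) = a) * dd ((q:ℕ) = b))
        = dd ((p:ℕ) = a) * (dd ((q:ℕ) = b) * f (p,q)) := fun q => by ring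
    rw [Finset.sum_congr rfl (fun q _ => hc q), ← Finset.mul_sum,
      sum_pt hb (fun q => f (p, q))]
  rw [Finset.sum_congr rfl (fun p _ => h1 p), sum_pt ha (fun p => f (p, ⟨b,hb⟩))]

lemma sum_fst {k l : ℕ} {a : ℕ} (ha : a < k) (f : Fin k × Fin l → ZMod 2) :
    ∑ pq : Fin k × Fin l, f pq * dd ((pq.1:ℕ) = a) = ∑ q : Fin l, f (⟨a,ha⟩, q) := by
  rw [Fintype.sum_prod_type]
  have h1 : ∀ p : Fin k, (∑ q : Fin l, f (p,q) * dd ((p:ℕ) = a))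
      = dd ((p:ℕ) = a) * ∑ q : Fin l, f (p,q) := by
    intro p; rw [Finset.mul_sum]; exact Finset.sum_congr rfl fun q _ => by ring
  rw [Finset.sum_congr rfl (fun p _ => h1 p), sum_pt ha (fun p => ∑ q : Fin l, f (p,q))]

lemma sum_snd {k l : ℕ} {b : ℕ} (hb : b < l) (f : Fin k × Fin l → ZMod 2) :
    ∑ pq : Fin k × Fin l, f pq * dd ((pq.2:ℕ) = b) = ∑ p : Fin k, f (p, ⟨b,hb⟩) := by
  rw [Fintype.sum_prod_type]
  have h1 : ∀ p : Fin k, (∑ q : Fin l, f (p,q) * dd ((q:ℕ) = b)) = f (p, ⟨b,hb⟩) := by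
    intro p
    have hc : ∀ q : Fin l, f (p,q) * dd ((q:ℕ) = b) = dd ((q:ℕ) = b) * f (p,q) :=
      fun q => by ring
    rw [Finset.sum_congr rfl (fun q _ => hc q), sum_pt hb (fun q => f (p, q))]
  exact Finset.sum_congr rfl (fun p _ => h1 p)

variable (n m)

/-- the parametrizing linear map -/
def psiL : (ZMod 2 × ZMod 2 × ((Fin (n-2) × Fin (m-2)) → ZMod 2))
    →ₗ[ZMod 2] ((Fin n × Fin m) → ZMod 2) where
  toFun w := w.1 • vC n m + w.2.1 • vT n m
    + ∑ pq : Fin (n-2) × Fin (m-2), w.2.2 pq • vR n m pq.1 pq.2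
  map_add' w w' := by
    simp only [Prod.fst_add, Prod.snd_add, Pi.add_apply, add_smul, Finset.sum_add_distrib]
    abel
  map_smul' r w := by
    simp only [Prod.smul_fst, Prod.smul_snd, Pi.smul_apply, smul_eq_mul, mul_smul,
      RingHom.id_apply, smul_add, Finset.smul_sum]

lemma psiL_apply (w : ZMod 2 × ZMod 2 × ((Fin (n-2) × Fin (m-2)) → ZMod 2))
    (z : Fin n × Fin m) :
    psiL n m w z = w.1 * vC n m z + w.2.1 * vT n m z
      + ∑ pq : Fin (n-2) × Fin (m-2), w.2.2 pq * vR n m pq.1 pq.2 z := by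
  simp [psiL, Finset.sum_apply]

variable {n m}

lemma psiL_inj (hn : 3 ≤ n) (hm : 3 ≤ m) : Function.Injective (psiL n m) := by
  refine LinearMap.ker_eq_bot.mp (LinearMap.ker_eq_bot'.mpr ?_)
  rintro ⟨c, t, y⟩ hw
  have ht : t = 0 := by
    have h00 := congrFun hw (⟨0, by omega⟩, ⟨0, by omega⟩)
    rw [psiL_apply] at h00
    simp only [Pi.zero_apply] at h00
    have e1 : vC n m (⟨0, by omega⟩, ⟨0, by omega⟩) = 0 := by simp [vC, dd]
    have e2 : vT n m (⟨0, by omega⟩, ⟨0, by omega⟩) = 1 := by simp [vT, dd]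
    have e3 : ∑ pq : Fin (n-2) × Fin (m-2),
        y pq * vR n m pq.1 pq.2 (⟨0, by omega⟩, ⟨0, by omega⟩) = 0 := by
      refine Finset.sum_eq_zero fun pq _ => ?_
      simp only [vR, dd]
      split_ifs <;> first | ring1 | contradiction | omega
    rw [e1, e2, e3] at h00
    have : ∀ c t : ZMod 2, c * 0 + t * 1 + 0 = 0 → t = 0 := by decide
    exact this _ _ h00
  have hc : c = 0 := by
    have h10 := congrFun hw (⟨1, by omega⟩, ⟨0, by omega⟩)
    rw [psiL_apply] at h10
    simp only [Pi.zero_apply] at h10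
    have e1 : vC n m (⟨1, by omega⟩, ⟨0, by omega⟩) = 1 := by simp [vC, dd]
    have e2 : vT n m (⟨1, by omega⟩, ⟨0, by omega⟩) = 0 := by simp [vT, dd]
    have e3 : ∑ pq : Fin (n-2) × Fin (m-2),
        y pq * vR n m pq.1 pq.2 (⟨1, by omega⟩, ⟨0, by omega⟩) = 0 := by
      refine Finset.sum_eq_zero fun pq _ => ?_
      simp only [vR, dd]
      split_ifs <;> first | ring1 | contradiction | omega
    rw [e1, e2, e3] at h10
    have : ∀ c t : ZMod 2, c * 1 + t * 0 + 0 = 0 → c = 0 := by decide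
    exact this _ _ h10
  have hy : y = 0 := by
    funext pq0
    obtain ⟨p0, q0⟩ := pq0
    have hp0 := p0.isLt
    have hq0 := q0.isLt
    have hab := congrFun hw (⟨(p0:ℕ)+1, by omega⟩, ⟨(q0:ℕ)+1, by omega⟩)
    rw [psiL_apply] at hab
    simp only [Pi.zero_apply] at hab
    have e1 : vC n m (⟨(p0:ℕ)+1, by omega⟩, ⟨(q0:ℕ)+1, by omega⟩) = 0 := by simp [vC, dd]
    have e3 : ∑ pq : Fin (n-2) × Fin (m-2),
        y pq * vR n m pq.1 pq.2 (⟨(p0:ℕ)+1, by omega⟩, ⟨(q0:ℕ)+1, by omega⟩)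
        = y (p0, q0) := by
      have hvr : ∀ pq : Fin (n-2) × Fin (m-2),
          vR n m pq.1 pq.2 (⟨(p0:ℕ)+1, by omega⟩, ⟨(q0:ℕ)+1, by omega⟩)
          = dd ((pq.1:ℕ) = (p0:ℕ)) * dd ((pq.2:ℕ) = (q0:ℕ)) := by
        intro pq
        have h1 := pq.1.isLt
        have h2 := pq.2.isLt
        simp only [vR, dd]
        split_ifs <;> first | rfl | contradiction | omega | decide
      rw [Finset.sum_congr rfl (fun pq _ => by rw [hvr pq]), sum_pair hp0 hq0 y]
    rw [e1, e3, ht] at hab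
    have : ∀ a v y0 : ZMod 2, a * 0 + 0 * v + y0 = 0 → y0 = 0 := by decide
    exact this _ _ _ hab
  simp [ht, hc, hy, Prod.ext_iff]


lemma sum_vR_zero_left (hn : 3 ≤ n) (g : Fin (n-2) × Fin (m-2) → ZMod 2)
    (i : Fin n) (j : Fin m) (hi : (i:ℕ) = 0) :
    ∑ pq : Fin (n-2) × Fin (m-2), g pq * vR n m pq.1 pq.2 (i, j) = 0 := by
  refine Finset.sum_eq_zero fun pq _ => ?_
  simp only [vR, dd, hi]
  split_ifs <;> first | ring1 | contradiction | omega

lemma sum_vR_zero_right (hm : 3 ≤ m) (g : Fin (n-2) × Fin (m-2) → ZMod 2)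
    (i : Fin n) (j : Fin m) (hj : (j:ℕ) = 0) :
    ∑ pq : Fin (n-2) × Fin (m-2), g pq * vR n m pq.1 pq.2 (i, j) = 0 := by
  refine Finset.sum_eq_zero fun pq _ => ?_
  simp only [vR, dd, hj]
  split_ifs <;> first | ring1 | contradiction | omega

lemma vC_nn {i : Fin n} {j : Fin m} (hi : ¬ (i:ℕ) = 0) (hj : ¬ (j:ℕ) = 0) :
    vC n m (i, j) = 0 := by simp [vC, dd, hi, hj]

lemma vT_ii {i : Fin n} {j : Fin m} {a b : ℕ} (hia : (i:ℕ) = a+1) (hjb : (j:ℕ) = b+1) :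
    vT n m (i, j) = dd (a = 0) + dd (b = 0) := by
  simp only [vT, dd, hia, hjb]
  split_ifs <;> first | rfl | contradiction | omega | decide

lemma vT_il {i : Fin n} {j : Fin m} {a : ℕ} (hm : 3 ≤ m)
    (hia : (i:ℕ) = a+1) (hj : (j:ℕ) = m-1) :
    vT n m (i, j) = dd (a = 0) := by
  simp only [vT, dd, hia, hj]
  split_ifs <;> first | rfl | contradiction | omega | decide

lemma vT_li {i : Fin n} {j : Fin m} {b : ℕ} (hn : 3 ≤ n)
    (hi : (i:ℕ) = n-1) (hjb : (j:ℕ) = b+1) :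
    vT n m (i, j) = dd (b = 0) := by
  simp only [vT, dd, hi, hjb]
  split_ifs <;> first | rfl | contradiction | omega | decide

lemma vT_ll {i : Fin n} {j : Fin m} (hn : 3 ≤ n) (hm : 3 ≤ m)
    (hi : (i:ℕ) = n-1) (hj : (j:ℕ) = m-1) :
    vT n m (i, j) = 0 := by
  simp only [vT, dd, hi, hj]
  split_ifs <;> first | rfl | contradiction | omega | decide

lemma sum_g_ii (hn : 3 ≤ n) (hm : 3 ≤ m) (g : ℕ → ℕ → ZMod 2) {i : Fin n} {j : Fin m}
    {a b : ℕ} (ha : a < n-2) (hb : b < m-2) (hia : (i:ℕ) = a+1) (hjb : (j:ℕ) = b+1) :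
    ∑ pq : Fin (n-2) × Fin (m-2), g (pq.1:ℕ) (pq.2:ℕ) * vR n m pq.1 pq.2 (i, j) = g a b := by
  have hvr : ∀ pq : Fin (n-2) × Fin (m-2),
      vR n m pq.1 pq.2 (i, j) = dd ((pq.1:ℕ) = a) * dd ((pq.2:ℕ) = b) := by
    intro pq
    have h1 := pq.1.isLt; have h2 := pq.2.isLt
    simp only [vR, dd, hia, hjb]
    split_ifs <;> first | rfl | contradiction | omega | decide
  rw [Finset.sum_congr rfl (fun pq _ => by rw [hvr pq]),
    sum_pair ha hb (fun pq => g (pq.1:ℕ) (pq.2:ℕ))]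

lemma sum_g_il (hn : 3 ≤ n) (hm : 3 ≤ m) (g : ℕ → ℕ → ZMod 2) {i : Fin n} {j : Fin m}
    {a : ℕ} (ha : a < n-2) (hia : (i:ℕ) = a+1) (hj : (j:ℕ) = m-1) :
    ∑ pq : Fin (n-2) × Fin (m-2), g (pq.1:ℕ) (pq.2:ℕ) * vR n m pq.1 pq.2 (i, j)
      = ∑ q : Fin (m-2), g a (q:ℕ) := by
  have hvr : ∀ pq : Fin (n-2) × Fin (m-2),
      vR n m pq.1 pq.2 (i, j) = dd ((pq.1:ℕ) = a) := by
    intro pq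
    have h1 := pq.1.isLt; have h2 := pq.2.isLt
    simp only [vR, dd, hia, hj]
    split_ifs <;> first | rfl | contradiction | omega | decide
  rw [Finset.sum_congr rfl (fun pq _ => by rw [hvr pq]),
    sum_fst ha (fun pq => g (pq.1:ℕ) (pq.2:ℕ))]

lemma sum_g_li (hn : 3 ≤ n) (hm : 3 ≤ m) (g : ℕ → ℕ → ZMod 2) {i : Fin n} {j : Fin m}
    {b : ℕ} (hb : b < m-2) (hi : (i:ℕ) = n-1) (hjb : (j:ℕ) = b+1) :
    ∑ pq : Fin (n-2) × Fin (m-2), g (pq.1:ℕ) (pq.2:ℕ) * vR n m pq.1 pq.2 (i, j)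
      = ∑ p : Fin (n-2), g (p:ℕ) b := by
  have hvr : ∀ pq : Fin (n-2) × Fin (m-2),
      vR n m pq.1 pq.2 (i, j) = dd ((pq.2:ℕ) = b) := by
    intro pq
    have h1 := pq.1.isLt; have h2 := pq.2.isLt
    simp only [vR, dd, hi, hjb]
    split_ifs <;> first | rfl | contradiction | omega | decide
  rw [Finset.sum_congr rfl (fun pq _ => by rw [hvr pq]),
    sum_snd hb (fun pq => g (pq.1:ℕ) (pq.2:ℕ))]

lemma sum_g_ll (hn : 3 ≤ n) (hm : 3 ≤ m) (g : ℕ → ℕ → ZMod 2) {i : Fin n} {j : Fin m}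
    (hi : (i:ℕ) = n-1) (hj : (j:ℕ) = m-1) :
    ∑ pq : Fin (n-2) × Fin (m-2), g (pq.1:ℕ) (pq.2:ℕ) * vR n m pq.1 pq.2 (i, j)
      = ∑ p : Fin (n-2), ∑ q : Fin (m-2), g (p:ℕ) (q:ℕ) := by
  have hvr : ∀ pq : Fin (n-2) × Fin (m-2), vR n m pq.1 pq.2 (i, j) = 1 := by
    intro pq
    have h1 := pq.1.isLt; have h2 := pq.2.isLt
    simp only [vR, dd, hi, hj]
    split_ifs <;> first | rfl | contradiction | omega | decide
  rw [Finset.sum_congr rfl (fun pq _ => by rw [hvr pq, mul_one]), Fintype.sum_prod_type]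

set_option maxHeartbeats 1000000 in
lemma ker_sub_range (hn : 3 ≤ n) (hm : 3 ≤ m) (hnodd : Odd n) (hmodd : Odd m)
    (x : Fin n × Fin m → ZMod 2)
    (hx : (starAdj n ⊗ₖ (1 : Matrix (Fin m) (Fin m) (ZMod 2))
      + (1 : Matrix (Fin n) (Fin n) (ZMod 2)) ⊗ₖ starAdj m).mulVecLin x = 0) :
    ∃ w, psiL n m w = x := by
  have hn2 : Odd (n-2) := Nat.Odd.sub_even (by omega) hnodd even_two
  have hm2 : Odd (m-2) := Nat.Odd.sub_even (by omega) hmodd even_two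
  have E := (mem_ker_iff n m x).mp hx
  have hE4 : ∀ (i : Fin n) (j : Fin m), (i:ℕ) ≠ 0 → (j:ℕ) ≠ 0 →
      x (⟨0, by omega⟩, j) + x (i, ⟨0, by omega⟩) = 0 := by
    intro i j hi hj
    have hE := E i j
    rw [sum_pt (show (0:ℕ) < n by omega) (fun i' => x (i', j)),
        sum_pt (show (0:ℕ) < m by omega) (fun j' => x (i, j')),
        dd_of_not (show ¬ (i:ℕ) = 0 from hi), dd_of (show (i:ℕ) ≠ 0 from hi),
        dd_of_not (show ¬ (j:ℕ) = 0 from hj), dd_of (show (j:ℕ) ≠ 0 from hj)] at hE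
    have h : ∀ S A S' B : ZMod 2, 0 * S + 1 * A + 0 * S' + 1 * B = 0 → A + B = 0 := by decide
    exact h _ _ _ _ hE
  have hadd : ∀ a b : ZMod 2, a + b = 0 → a = b := by decide
  have hx0j : ∀ (j : Fin m), (j:ℕ) ≠ 0 →
      x (⟨0, by omega⟩, j) = x (⟨1, by omega⟩, ⟨0, by omega⟩) := by
    intro j hj
    exact hadd _ _ (hE4 ⟨1, by omega⟩ j Nat.one_ne_zero hj)
  have hxi0 : ∀ (i : Fin n), (i:ℕ) ≠ 0 →
      x (i, ⟨0, by omega⟩) = x (⟨1, by omega⟩, ⟨0, by omega⟩) := by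
    intro i hi
    have h1 := hE4 i ⟨1, by omega⟩ hi Nat.one_ne_zero
    have h2 := hx0j ⟨1, by omega⟩ Nat.one_ne_zero
    rw [h2] at h1
    exact ((hadd _ _ h1).symm)
  have hrow : ∀ (i : Fin n), (i:ℕ) ≠ 0 →
      x (i, ⟨m-1, by omega⟩) = x (⟨0, by omega⟩, ⟨0, by omega⟩)
        + ∑ q : Fin (m-2), x (i, ⟨(q:ℕ)+1, by omega⟩) := by
    intro i hi
    have hE := E i ⟨0, by omega⟩
    rw [sum_pt (show (0:ℕ) < n by omega) (fun i' => x (i', ⟨0, by omega⟩)),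
        sum_ne hm (fun j' => x (i, j')),
        dd_of_not (show ¬ (i:ℕ) = 0 from hi), dd_of (show (i:ℕ) ≠ 0 from hi),
        dd_of (show ((⟨0, by omega⟩ : Fin m):ℕ) = 0 from rfl),
        dd_of_not (show ¬ ((⟨0, by omega⟩ : Fin m):ℕ) ≠ 0 from fun h => h rfl)] at hE
    have h : ∀ S A B C S' : ZMod 2, 0 * S + 1 * A + 1 * (B + C) + 0 * S' = 0 → C = A + B := by
      decide
    exact h _ _ _ _ _ hE
  have hcol : ∀ (j : Fin m), (j:ℕ) ≠ 0 →
      x (⟨n-1, by omega⟩, j) = x (⟨0, by omega⟩, ⟨0, by omega⟩)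
        + ∑ p : Fin (n-2), x (⟨(p:ℕ)+1, by omega⟩, j) := by
    intro j hj
    have hE := E ⟨0, by omega⟩ j
    rw [sum_pt (show (0:ℕ) < m by omega) (fun j' => x (⟨0, by omega⟩, j')),
        sum_ne hn (fun i' => x (i', j)),
        dd_of_not (show ¬ (j:ℕ) = 0 from hj), dd_of (show (j:ℕ) ≠ 0 from hj),
        dd_of (show ((⟨0, by omega⟩ : Fin n):ℕ) = 0 from rfl),
        dd_of_not (show ¬ ((⟨0, by omega⟩ : Fin n):ℕ) ≠ 0 from fun h => h rfl)] at hE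
    have h : ∀ B C S S' A : ZMod 2, 1 * (B + C) + 0 * S + 0 * S' + 1 * A = 0 → C = A + B := by
      decide
    exact h _ _ _ _ _ hE
  clear hx E hE4 hadd
  have h0n : 0 < n := by omega
  have h0m : 0 < m := by omega
  have h1n : 1 < n := by omega
  have hn1 : n-1 < n := by omega
  have hm1 : m-1 < m := by omega
  have hq1 : ∀ q : Fin (m-2), (q:ℕ)+1 < m := fun q => by have := q.isLt; omega
  have hp1 : ∀ p : Fin (n-2), (p:ℕ)+1 < n := fun p => by have := p.isLt; omega
  set G : ℕ → ℕ → ZMod 2 := fun u v =>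
    (∑ z : Fin n × Fin m, x z * (dd ((z.1:ℕ) = u+1) * dd ((z.2:ℕ) = v+1)))
    + x (⟨0, h0n⟩, ⟨0, h0m⟩) * (dd (u = 0) + dd (v = 0)) with hG
  have hGab : ∀ (u v : ℕ) (i' : Fin n) (j' : Fin m), (i':ℕ) = u+1 → (j':ℕ) = v+1 →
      G u v = x (i', j') + x (⟨0, h0n⟩, ⟨0, h0m⟩) * (dd (u = 0) + dd (v = 0)) := by
    intro u v i' j' hi' hj'
    have hu : u+1 < n := by have := i'.isLt; omega
    have hv : v+1 < m := by have := j'.isLt; omega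
    simp only [hG]
    rw [sum_pair hu hv x,
      show (⟨u+1, hu⟩ : Fin n) = i' from Fin.ext hi'.symm,
      show (⟨v+1, hv⟩ : Fin m) = j' from Fin.ext hj'.symm]
  refine ⟨(x (⟨1, h1n⟩, ⟨0, h0m⟩), x (⟨0, h0n⟩, ⟨0, h0m⟩),
    fun pq => G (pq.1:ℕ) (pq.2:ℕ)), ?_⟩
  funext z
  obtain ⟨i, j⟩ := z
  rw [psiL_apply]
  dsimp only
  by_cases hi0 : (i:ℕ) = 0 <;> by_cases hj0 : (j:ℕ) = 0
  · -- i = 0, j = 0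
    rw [sum_vR_zero_left hn _ _ _ hi0]
    have e1 : vC n m (i, j) = 0 := by simp [vC, dd, hi0, hj0]
    have e2 : vT n m (i, j) = 1 := by simp [vT, dd, hi0, hj0]
    rw [e1, e2, show i = ⟨0, h0n⟩ from Fin.ext hi0, show j = ⟨0, h0m⟩ from Fin.ext hj0]
    have h : ∀ c t : ZMod 2, c * 0 + t * 1 + 0 = t := by decide
    exact h _ _
  · -- i = 0, j ≠ 0
    rw [sum_vR_zero_left hn _ _ _ hi0]
    have e1 : vC n m (i, j) = 1 := by simp [vC, dd, hi0, hj0]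
    have e2 : vT n m (i, j) = 0 := by simp [vT, dd, hi0, hj0]
    rw [e1, e2, show i = ⟨0, h0n⟩ from Fin.ext hi0, hx0j j hj0]
    have h : ∀ c t : ZMod 2, c * 1 + t * 0 + 0 = c := by decide
    exact h _ _
  · -- i ≠ 0, j = 0
    rw [sum_vR_zero_right hm _ _ _ hj0]
    have e1 : vC n m (i, j) = 1 := by simp [vC, dd, hi0, hj0]
    have e2 : vT n m (i, j) = 0 := by simp [vT, dd, hi0, hj0]
    rw [e1, e2, show j = ⟨0, h0m⟩ from Fin.ext hj0, hxi0 i hi0]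
    have h : ∀ c t : ZMod 2, c * 1 + t * 0 + 0 = c := by decide
    exact h _ _
  · -- i ≠ 0, j ≠ 0
    rw [vC_nn hi0 hj0]
    rcases Nat.lt_or_ge ((i:ℕ)) (n-1) with hilt | hige
    all_goals rcases Nat.lt_or_ge ((j:ℕ)) (m-1) with hjlt | hjge
    · -- interior, interior
      obtain ⟨a, ha, hia⟩ : ∃ a, a < n-2 ∧ (i:ℕ) = a+1 := ⟨(i:ℕ)-1, by omega, by omega⟩
      obtain ⟨b, hb, hjb⟩ : ∃ b, b < m-2 ∧ (j:ℕ) = b+1 := ⟨(j:ℕ)-1, by omega, by omega⟩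
      rw [sum_g_ii hn hm G ha hb hia hjb, vT_ii hia hjb, hGab a b i j hia hjb]
      have h : ∀ c t u v X : ZMod 2, c * 0 + t * (u + v) + (X + t * (u + v)) = X := by decide
      exact h _ _ _ _ _
    · -- interior, last
      obtain ⟨a, ha, hia⟩ : ∃ a, a < n-2 ∧ (i:ℕ) = a+1 := ⟨(i:ℕ)-1, by omega, by omega⟩
      have hjl : (j:ℕ) = m-1 := by have := j.isLt; omega
      have hsplit : ∑ q : Fin (m-2), G a (q:ℕ)
          = (∑ q : Fin (m-2), x (i, ⟨(q:ℕ)+1, hq1 q⟩))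
            + (x (⟨0, h0n⟩, ⟨0, h0m⟩) * dd (a = 0) + x (⟨0, h0n⟩, ⟨0, h0m⟩)) := by
        rw [Finset.sum_congr rfl
            (fun (q : Fin (m-2)) _ => hGab a (q:ℕ) i ⟨(q:ℕ)+1, hq1 q⟩ hia rfl),
          Finset.sum_add_distrib]
        congr 1
        rw [Finset.sum_congr rfl (fun (q : Fin (m-2)) _ =>
            show x (⟨0, h0n⟩, ⟨0, h0m⟩) * (dd (a = 0) + dd ((q:ℕ) = 0))
              = x (⟨0, h0n⟩, ⟨0, h0m⟩) * dd (a = 0)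
                + dd ((q:ℕ) = 0) * x (⟨0, h0n⟩, ⟨0, h0m⟩) from by ring),
          Finset.sum_add_distrib, sum_const_odd hm2,
          sum_pt (show (0:ℕ) < m-2 by omega) (fun _ => x (⟨0, h0n⟩, ⟨0, h0m⟩))]
      rw [sum_g_il hn hm G ha hia hjl, vT_il hm hia hjl, hsplit,
        show j = ⟨m-1, hm1⟩ from Fin.ext hjl, hrow i hi0]
      have h : ∀ c t u X : ZMod 2, c * 0 + t * u + (X + (t * u + t)) = t + X := by decide
      exact h _ _ _ _
    · -- last, interior
      obtain ⟨b, hb, hjb⟩ : ∃ b, b < m-2 ∧ (j:ℕ) = b+1 := ⟨(j:ℕ)-1, by omega, by omega⟩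
      have hil : (i:ℕ) = n-1 := by have := i.isLt; omega
      have hsplit : ∑ p : Fin (n-2), G (p:ℕ) b
          = (∑ p : Fin (n-2), x (⟨(p:ℕ)+1, hp1 p⟩, j))
            + (x (⟨0, h0n⟩, ⟨0, h0m⟩) + x (⟨0, h0n⟩, ⟨0, h0m⟩) * dd (b = 0)) := by
        rw [Finset.sum_congr rfl
            (fun (p : Fin (n-2)) _ => hGab (p:ℕ) b ⟨(p:ℕ)+1, hp1 p⟩ j rfl hjb),
          Finset.sum_add_distrib]
        congr 1
        rw [Finset.sum_congr rfl (fun (p : Fin (n-2)) _ =>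
            show x (⟨0, h0n⟩, ⟨0, h0m⟩) * (dd ((p:ℕ) = 0) + dd (b = 0))
              = dd ((p:ℕ) = 0) * x (⟨0, h0n⟩, ⟨0, h0m⟩)
                + x (⟨0, h0n⟩, ⟨0, h0m⟩) * dd (b = 0) from by ring),
          Finset.sum_add_distrib, sum_const_odd hn2,
          sum_pt (show (0:ℕ) < n-2 by omega) (fun _ => x (⟨0, h0n⟩, ⟨0, h0m⟩))]
      rw [sum_g_li hn hm G hb hil hjb, vT_li hn hil hjb, hsplit,
        show i = ⟨n-1, hn1⟩ from Fin.ext hil, hcol j hj0]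
      have h : ∀ c t u X : ZMod 2, c * 0 + t * u + (X + (t + t * u)) = t + X := by decide
      exact h _ _ _ _
    · -- last, last
      have hil : (i:ℕ) = n-1 := by have := i.isLt; omega
      have hjl : (j:ℕ) = m-1 := by have := j.isLt; omega
      have hsplitrow : ∀ p : Fin (n-2), ∑ q : Fin (m-2), G (p:ℕ) (q:ℕ)
          = (∑ q : Fin (m-2), x (⟨(p:ℕ)+1, hp1 p⟩, ⟨(q:ℕ)+1, hq1 q⟩))
            + (x (⟨0, h0n⟩, ⟨0, h0m⟩) * dd ((p:ℕ) = 0) + x (⟨0, h0n⟩, ⟨0, h0m⟩)) := by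
        intro p
        rw [Finset.sum_congr rfl
            (fun (q : Fin (m-2)) _ => hGab (p:ℕ) (q:ℕ) ⟨(p:ℕ)+1, hp1 p⟩ ⟨(q:ℕ)+1, hq1 q⟩ rfl rfl),
          Finset.sum_add_distrib]
        congr 1
        rw [Finset.sum_congr rfl (fun (q : Fin (m-2)) _ =>
            show x (⟨0, h0n⟩, ⟨0, h0m⟩) * (dd ((p:ℕ) = 0) + dd ((q:ℕ) = 0))
              = x (⟨0, h0n⟩, ⟨0, h0m⟩) * dd ((p:ℕ) = 0)
                + dd ((q:ℕ) = 0) * x (⟨0, h0n⟩, ⟨0, h0m⟩) from by ring),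
          Finset.sum_add_distrib, sum_const_odd hm2,
          sum_pt (show (0:ℕ) < m-2 by omega) (fun _ => x (⟨0, h0n⟩, ⟨0, h0m⟩))]
      have houter : ∑ p : Fin (n-2),
          (x (⟨0, h0n⟩, ⟨0, h0m⟩) * dd ((p:ℕ) = 0) + x (⟨0, h0n⟩, ⟨0, h0m⟩))
          = x (⟨0, h0n⟩, ⟨0, h0m⟩) + x (⟨0, h0n⟩, ⟨0, h0m⟩) := by
        rw [Finset.sum_add_distrib, sum_const_odd hn2]
        congr 1
        rw [Finset.sum_congr rfl (fun (p : Fin (n-2)) _ =>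
            show x (⟨0, h0n⟩, ⟨0, h0m⟩) * dd ((p:ℕ) = 0)
              = dd ((p:ℕ) = 0) * x (⟨0, h0n⟩, ⟨0, h0m⟩) from by ring),
          sum_pt (show (0:ℕ) < n-2 by omega) (fun _ => x (⟨0, h0n⟩, ⟨0, h0m⟩))]
      have hrows : ∑ p : Fin (n-2), x (⟨(p:ℕ)+1, hp1 p⟩, ⟨m-1, hm1⟩)
          = x (⟨0, h0n⟩, ⟨0, h0m⟩)
            + ∑ p : Fin (n-2), ∑ q : Fin (m-2), x (⟨(p:ℕ)+1, hp1 p⟩, ⟨(q:ℕ)+1, hq1 q⟩) := by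
        rw [Finset.sum_congr rfl
            (fun (p : Fin (n-2)) _ => hrow ⟨(p:ℕ)+1, hp1 p⟩ (Nat.succ_ne_zero _)),
          Finset.sum_add_distrib, sum_const_odd hn2]
      rw [sum_g_ll hn hm G hil hjl, vT_ll hn hm hil hjl,
        Finset.sum_congr rfl (fun (p : Fin (n-2)) _ => hsplitrow p), Finset.sum_add_distrib,
        houter, show i = ⟨n-1, hn1⟩ from Fin.ext hil, show j = ⟨m-1, hm1⟩ from Fin.ext hjl,
        hcol ⟨m-1, hm1⟩ (show ¬ (m-1 = 0) by omega), hrows]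
      have h : ∀ t S : ZMod 2, 0 * 0 + t * 0 + (S + (t + t)) = t + (t + S) := by decide
      exact h _ _



end NSCaux

/-- for odd `n, m ≥ 3`, the nullity over `ℤ₂` of the adjacency matrix
`A_{S_n} ⊗ I + I ⊗ A_{S_m}` of `S_n □ S_m` equals `(m − 2)(n − 2) + 2`. -/
theorem nullity_star_cartesian_star {n m : ℕ} (hn : 3 ≤ n) (hm : 3 ≤ m)
    (hnodd : Odd n) (hmodd : Odd m) :
    Module.finrank (ZMod 2)
        (LinearMap.ker ((starAdj n ⊗ₖ (1 : Matrix (Fin m) (Fin m) (ZMod 2))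
          + (1 : Matrix (Fin n) (Fin n) (ZMod 2)) ⊗ₖ starAdj m).mulVecLin))
      = (m - 2) * (n - 2) + 2 := by
  have hmem : ∀ w, (starAdj n ⊗ₖ (1 : Matrix (Fin m) (Fin m) (ZMod 2))
      + (1 : Matrix (Fin n) (Fin n) (ZMod 2)) ⊗ₖ starAdj m).mulVecLin
        (NSCaux.psiL n m w) = 0 := by
    intro w
    have hw : NSCaux.psiL n m w = w.1 • NSCaux.vC n m + w.2.1 • NSCaux.vT n m
        + ∑ pq : Fin (n-2) × Fin (m-2), w.2.2 pq • NSCaux.vR n m pq.1 pq.2 := rfl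
    rw [hw]
    have h1 := NSCaux.vC_ker hn hm hnodd hmodd
    have h2 := NSCaux.vT_ker hn hm hnodd hmodd
    have h3 := fun p q => NSCaux.vR_ker hn hm p q
    set L := (starAdj n ⊗ₖ (1 : Matrix (Fin m) (Fin m) (ZMod 2))
        + (1 : Matrix (Fin n) (Fin n) (ZMod 2)) ⊗ₖ starAdj m).mulVecLin with hL
    clear_value L
    simp only [map_add, _root_.map_smul, map_sum, h1,
      h2, h3, smul_zero, add_zero,
      Finset.sum_const_zero]
  have hrange : LinearMap.ker ((starAdj n ⊗ₖ (1 : Matrix (Fin m) (Fin m) (ZMod 2))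
      + (1 : Matrix (Fin n) (Fin n) (ZMod 2)) ⊗ₖ starAdj m).mulVecLin)
      = LinearMap.range (NSCaux.psiL n m) := by
    apply le_antisymm
    · intro x hx
      exact NSCaux.ker_sub_range hn hm hnodd hmodd x (LinearMap.mem_ker.mp hx)
    · rintro x ⟨w, rfl⟩
      exact LinearMap.mem_ker.mpr (hmem w)
  rw [hrange, LinearMap.finrank_range_of_inj (NSCaux.psiL_inj hn hm)]
  rw [Module.finrank_prod, Module.finrank_prod, Module.finrank_self, Module.finrank_pi,
    Fintype.card_prod, Fintype.card_fin, Fintype.card_fin]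
  have : (n-2)*(m-2) = (m-2)*(n-2) := Nat.mul_comm _ _
  omega
end
end

section
/- Over ℤ₂, the Lights Out! game with open neighborhood switching on the Cartesian product G □ H, with G on m vertices (adjacency matrix A) and H on n vertices (adjacency matrix B), arranging lights in an m × n array C, is solvable if and only if the Sylvester equation AX − XB = C (equivalently AX + XB = C over ℤ₂) has a solution X over ℤ₂. -/
open Matrix
noncomputable section

lemma lightsOut_sum_eq {m n : ℕ} (A : Matrix (Fin m) (Fin m) (ZMod 2))
    (B : Matrix (Fin n) (Fin n) (ZMod 2)) (X : Matrix (Fin m) (Fin n) (ZMod 2)) :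
    ∑ i : Fin m, ∑ j : Fin n,
      X i j • (A * Matrix.single i j (1 : ZMod 2) + Matrix.single i j (1 : ZMod 2) * B)
      = A * X + X * B := by
  ext a b
  simp only [Matrix.sum_apply, Matrix.add_apply, Matrix.smul_apply, Matrix.mul_apply,
    Matrix.single, Matrix.of_apply, smul_eq_mul]
  simp only [mul_add, Finset.sum_add_distrib, ite_and, Finset.sum_ite_eq,
    Finset.mem_univ, if_true, mul_ite, mul_zero, ite_mul, zero_mul]
  congr 1
  · rw [Finset.sum_comm]
    simp [Finset.sum_ite_eq, mul_comm]
  · simp [Finset.sum_ite_eq, mul_comm]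

/-- Lights Out! with open neighborhood switching on `G □ H`. Pressing cell
`(i,j)` (with parity `X i j`) adds `A·E_{ij} + E_{ij}·B` to the configuration mod 2, where
`E_{ij}` is the standard basis matrix. The game with initial configuration `C` is solvable
(all lights off after some presses) iff the Sylvester equation `AX − XB = C`
(equivalently `AX + XB = C` over `ℤ₂`) has a solution `X`. -/
theorem lightsOut_cartesian_solvable_iff_sylvester {m n : ℕ}
    (A : Matrix (Fin m) (Fin m) (ZMod 2)) (B : Matrix (Fin n) (Fin n) (ZMod 2))
    (hAsymm : A.IsSymm) (hAdiag : ∀ v, A v v = 0)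
    (hBsymm : B.IsSymm) (hBdiag : ∀ v, B v v = 0)
    (C : Matrix (Fin m) (Fin n) (ZMod 2)) :
    (∃ X : Matrix (Fin m) (Fin n) (ZMod 2),
        C + ∑ i : Fin m, ∑ j : Fin n,
          X i j • (A * Matrix.single i j (1 : ZMod 2) + Matrix.single i j (1 : ZMod 2) * B) = 0)
      ↔ (∃ X : Matrix (Fin m) (Fin n) (ZMod 2), A * X - X * B = C) := by
  have h2 : ∀ Y : Matrix (Fin m) (Fin n) (ZMod 2), -Y = Y := by
    intro Y; ext a b; exact CharTwo.neg_eq _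
  constructor
  · rintro ⟨X, hX⟩
    refine ⟨X, ?_⟩
    rw [lightsOut_sum_eq] at hX
    rw [sub_eq_add_neg, h2 (X * B)]
    have := eq_neg_of_add_eq_zero_left hX
    rw [h2] at this
    exact this.symm
  · rintro ⟨X, hX⟩
    refine ⟨X, ?_⟩
    rw [lightsOut_sum_eq]
    rw [sub_eq_add_neg, h2 (X * B)] at hX
    rw [hX]
    ext a b
    simp only [Matrix.add_apply, Matrix.zero_apply]
    exact CharTwo.add_self_eq_zero _
end
end
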